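/- For the quadratic loss u(s)=−s²/(2Δ) with Δ>0 and gaussian prior, the asymptotic mean-square error is independent of the inverse temperature: writing q(Δ,κ,h) for the q-component of the unique solution of the fixed-point system (given explicitly by q = c²(h²(Δ+c)²+Δ*α)/((Δ+c)²−αc²) with c = (√((2κΔ+α−1)²+8κΔ)−(2κΔ+α−1))/(4κ)), one has q(Δ/β, βκ, 2βκ√γ) = q(Δ, κ, 2κ√γ) for every β>0, every Δ,κ>0, α>0, Δ*≥0 and γ≥0. -/

import Mathlib

noncomputable section

/-- The constant `c = (√((2κΔ+α−1)² + 8κΔ) − (2κΔ+α−1)) / (4κ)`. -/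
def cConst (α Δ κ : ℝ) : ℝ :=
  (Real.sqrt ((2 * κ * Δ + α - 1) ^ 2 + 8 * κ * Δ) - (2 * κ * Δ + α - 1)) / (4 * κ)

/-- The `q`-component of the unique solution of the fixed-point system for the
quadratic loss `u(s) = −s²/(2Δ)`:
`q = c²(h²(Δ+c)² + Δ*α) / ((Δ+c)² − αc²)`. -/
def qFixed (α Δs Δ κ h : ℝ) : ℝ :=
  (cConst α Δ κ) ^ 2 * (h ^ 2 * (Δ + cConst α Δ κ) ^ 2 + Δs * α) /
    ((Δ + cConst α Δ κ) ^ 2 - α * (cConst α Δ κ) ^ 2)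

/-- for the quadratic loss with gaussian prior, the asymptotic
mean-square error is independent of the inverse temperature `β`:
`q(Δ/β, βκ, 2βκ√γ) = q(Δ, κ, 2κ√γ)` for all `β > 0`. -/
theorem quadratic_q_temperature_independent
    (α Δs Δ κ γ β : ℝ) (hα : 0 < α) (hΔs : 0 ≤ Δs) (hΔ : 0 < Δ) (hκ : 0 < κ)
    (hγ : 0 ≤ γ) (hβ : 0 < β) :
    qFixed α Δs (Δ / β) (β * κ) (2 * (β * κ) * Real.sqrt γ) =
      qFixed α Δs Δ κ (2 * κ * Real.sqrt γ) := by
  have hb : (β:ℝ) ≠ 0 := hβ.ne'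
  have hc : cConst α (Δ / β) (β * κ) = cConst α Δ κ / β := by
    unfold cConst
    rw [show 2 * (β * κ) * (Δ / β) = 2 * κ * Δ by field_simp,
        show 8 * (β * κ) * (Δ / β) = 8 * κ * Δ by field_simp,
        div_div]
    congr 1
    ring
  simp only [qFixed, hc]
  rw [show Δ / β + cConst α Δ κ / β = (Δ + cConst α Δ κ) / β by ring]
  rw [div_pow, div_pow]
  set c := cConst α Δ κ
  have key : ∀ a b : ℝ, (a / β ^ 2) / (b / β ^ 2) = a / b := by
    intro a b
    rcases eq_or_ne b 0 with h | h
    · simp [h]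
    · field_simp
  have e1 : c ^ 2 / β ^ 2 * ((2 * (β * κ) * Real.sqrt γ) ^ 2 * ((Δ + c) ^ 2 / β ^ 2) + Δs * α)
      = (c ^ 2 * ((2 * κ * Real.sqrt γ) ^ 2 * (Δ + c) ^ 2 + Δs * α)) / β ^ 2 := by
    field_simp
  have e2 : (Δ + c) ^ 2 / β ^ 2 - α * (c ^ 2 / β ^ 2)
      = ((Δ + c) ^ 2 - α * c ^ 2) / β ^ 2 := by ring
  rw [e1, e2, key]

end
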